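/- Let m, n₁, n₂, p be positive integers, let l : Fin m → Fin p be a map, and let V₁ and V₂ be m×n₁ and m×n₂ complex matrices. For r ∈ ℂ^p, let D_r denote the m×m diagonal matrix whose t-th diagonal entry is r(l(t)). Then for almost every (r, s) ∈ ℂ^p × ℂ^p, the rank of the m×(n₁+n₂) block matrix [D_r V₁ D_s V₂] is greater than or equal to the rank of the block matrix [V₁ V₂]. -/

import Mathlib

open Matrix MeasureTheory
open MvPolynomial

lemma ae_eval_ne_zero_fin : ∀ (N : ℕ) (q : MvPolynomial (Fin N) ℂ), q ≠ 0 →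
    ∀ᵐ x : Fin N → ℂ, eval x q ≠ 0 := by
  intro N
  induction N with
  | zero =>
    intro q hq
    refine Filter.Eventually.of_forall fun x => ?_
    obtain ⟨c, rfl⟩ := C_surjective (Fin 0) q
    simpa using fun h => hq (by simp [h])
  | succ N ih =>
    intro q hq
    have key : ∀ᵐ ys : ℂ × (Fin N → ℂ), eval (Fin.cons ys.1 ys.2) q ≠ 0 := by
      have hmeas : MeasurableSet {ys : ℂ × (Fin N → ℂ) | eval (Fin.cons ys.1 ys.2) q = 0} := by
        have hc : Continuous fun ys : ℂ × (Fin N → ℂ) => eval (Fin.cons ys.1 ys.2) q := by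
          apply (MvPolynomial.continuous_eval q).comp
          refine continuous_pi fun i => ?_
          refine Fin.cases ?_ ?_ i
          · exact continuous_fst
          · exact fun j => (continuous_apply j).comp continuous_snd
        exact (isClosed_singleton.preimage hc).measurableSet
      have hQ : finSuccEquiv ℂ N q ≠ 0 := by
        intro h
        exact hq ((finSuccEquiv ℂ N).injective (by simp [h]))
      have hlead : (finSuccEquiv ℂ N q).leadingCoeff ≠ 0 := Polynomial.leadingCoeff_ne_zero.2 hQ
      have hsec : ∀ᵐ s : Fin N → ℂ, ∀ᵐ y : ℂ, eval (Fin.cons y s) q ≠ 0 := by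
        filter_upwards [ih _ hlead] with s hs
        have hP : Polynomial.map (eval s) (finSuccEquiv ℂ N q) ≠ 0 := by
          intro h
          apply hs
          have h2 : (Polynomial.map (eval s) (finSuccEquiv ℂ N q)).coeff
              (finSuccEquiv ℂ N q).natDegree = 0 := by rw [h]; simp
          rw [Polynomial.coeff_map] at h2
          exact h2
        have hfin : {y : ℂ | (Polynomial.map (eval s) (finSuccEquiv ℂ N q)).IsRoot y}.Finite :=
          Polynomial.finite_setOf_isRoot hP
        have h0 : (volume : Measure ℂ) {y : ℂ | (Polynomial.map (eval s) (finSuccEquiv ℂ N q)).IsRoot y} = 0 :=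
          hfin.measure_zero _
        simp only [eval_eq_eval_mv_eval']
        exact (ae_iff).2 (by simpa [Polynomial.IsRoot, not_not] using h0)
      -- combine via ae_prod_iff_ae_ae and ae_ae_comm
      have := (Measure.ae_ae_comm (μ := (volume : Measure ℂ)) (ν := (volume : Measure (Fin N → ℂ)))
        (p := fun y s => eval (Fin.cons y s) q ≠ 0) ?hm).2 hsec
      · exact (Measure.ae_prod_iff_ae_ae (μ := (volume : Measure ℂ))
          (ν := (volume : Measure (Fin N → ℂ)))
          (p := fun ys => eval (Fin.cons ys.1 ys.2) q ≠ 0) hmeas.compl).2 this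
      · exact hmeas.compl
    have hmp := (measurePreserving_piFinSuccAbove (fun _ : Fin (N + 1) => (volume : Measure ℂ)) 0)
    have := hmp.quasiMeasurePreserving.ae key
    filter_upwards [this] with x hx
    have harg : (Fin.cons ((MeasurableEquiv.piFinSuccAbove (fun _ : Fin (N+1) => ℂ) 0 x).1)
        ((MeasurableEquiv.piFinSuccAbove (fun _ : Fin (N+1) => ℂ) 0 x).2) : Fin (N+1) → ℂ) = x := by
      funext i
      induction i using Fin.cases with
      | zero => simp [MeasurableEquiv.piFinSuccAbove]
      | succ j => simp [MeasurableEquiv.piFinSuccAbove, Fin.zero_succAbove, Fin.tail]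
    rwa [harg] at hx

lemma ae_eval_ne_zero {σ : Type*} [Fintype σ] (q : MvPolynomial σ ℂ) (hq : q ≠ 0) :
    ∀ᵐ x : σ → ℂ, eval x q ≠ 0 := by
  set e := Fintype.equivFin σ with he
  have hrq : rename e q ≠ 0 := fun h => hq (rename_injective e e.injective (by simpa using h))
  have h := ae_eval_ne_zero_fin _ _ hrq
  have hmp := measurePreserving_piCongrLeft (fun _ : Fin (Fintype.card σ) => (volume : Measure ℂ)) e
  have := hmp.quasiMeasurePreserving.ae h
  filter_upwards [this] with x hx
  intro h0
  apply hx
  rw [eval_rename]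
  have harg : ((MeasurableEquiv.piCongrLeft (fun _ : Fin (Fintype.card σ) => ℂ) e) x) ∘ e = x := by
    funext i
    exact Equiv.piCongrLeft_apply_apply (fun _ : Fin (Fintype.card σ) => ℂ) e x i
  rw [harg]
  exact h0

lemma le_rank_of_det_submatrix {m n : Type*} [Fintype m] [Fintype n] [DecidableEq m]
    [DecidableEq n] {k : ℕ} (A : Matrix m n ℂ) (α : Fin k → m) (β : Fin k → n)
    (h : (A.submatrix α β).det ≠ 0) : k ≤ A.rank := by
  have hs : A.submatrix α β = ((1 : Matrix m m ℂ).submatrix α (Equiv.refl m)) * A *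
      ((1 : Matrix n n ℂ).submatrix (Equiv.refl n) β) := by
    rw [Matrix.mul_submatrix_one, Matrix.one_submatrix_mul]
    simp
  have hu : IsUnit (A.submatrix α β) := (Matrix.isUnit_iff_isUnit_det _).2 (isUnit_iff_ne_zero.2 h)
  have hr : (A.submatrix α β).rank = k := by simpa using Matrix.rank_of_isUnit _ hu
  calc k = (A.submatrix α β).rank := hr.symm
    _ ≤ A.rank := by
        rw [hs]
        exact (Matrix.rank_mul_le_left _ _).trans (Matrix.rank_mul_le_right _ _)

lemma exists_cols {m n : Type*} [Fintype m] [Fintype n] (A : Matrix m n ℂ) {k : ℕ}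
    (hk : A.rank = k) :
    ∃ β : Fin k → n, LinearIndependent ℂ (fun j => Aᵀ (β j)) ∧ (A.submatrix id β).rank = k := by
  obtain ⟨t, hts, hspan, hli⟩ := exists_linearIndependent ℂ (Set.range Aᵀ)
  have htfin : t.Finite := hli.setFinite
  haveI := htfin.fintype
  have hcard : Fintype.card t = k := by
    rw [← Set.toFinset_card, ← finrank_span_set_eq_card hli, hspan]
    exact (Matrix.rank_eq_finrank_span_cols A).symm.trans hk
  have hsel : ∀ x : t, ∃ j : n, Aᵀ j = (x : m → ℂ) := fun x => hts x.2
  choose g hg using hsel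
  let e : Fin k ≃ t := (Fintype.equivFinOfCardEq hcard).symm
  have hfam : (fun j : Fin k => Aᵀ ((g ∘ e) j)) = Subtype.val ∘ e :=
    funext fun j => hg (e j)
  have hli' : LinearIndependent ℂ (fun j : Fin k => Aᵀ ((g ∘ e) j)) := by
    rw [hfam]; exact hli.comp e e.injective
  refine ⟨g ∘ e, hli', ?_⟩
  have hT : (A.submatrix id (g ∘ e))ᵀ = fun j : Fin k => Aᵀ ((g ∘ e) j) := by
    ext j i; simp [Matrix.submatrix_apply, Matrix.transpose_apply]
  rw [Matrix.rank_eq_finrank_span_cols, Matrix.col_def, hT]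
  simpa using finrank_span_eq_card hli'

lemma exists_minor {m n : Type*} [Fintype m] [Fintype n] (A : Matrix m n ℂ) :
    ∃ α : Fin A.rank → m, ∃ β : Fin A.rank → n, (A.submatrix α β).det ≠ 0 := by
  obtain ⟨β, hli, hrk⟩ := exists_cols A rfl
  set B := A.submatrix id β with hB
  have hBT : Bᵀ.rank = A.rank := by rw [Matrix.rank_transpose]; exact hrk
  obtain ⟨α, hli2, -⟩ := exists_cols Bᵀ hBT
  refine ⟨α, β, ?_⟩
  have hsub : A.submatrix α β = B.submatrix α id := by
    rw [hB, Matrix.submatrix_submatrix]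
    simp
  rw [hsub]
  have hrows : LinearIndependent ℂ (fun i : Fin A.rank => (B.submatrix α id) i) := by
    have : (fun i : Fin A.rank => (B.submatrix α id) i) = fun i => Bᵀᵀ (α i) := by
      ext i j; simp
    rw [this]; exact hli2
  have hu : IsUnit (B.submatrix α id) := Matrix.linearIndependent_rows_iff_isUnit.1 hrows
  exact ((Matrix.isUnit_iff_isUnit_det _).1 hu).ne_zero

/-- The `m × m` diagonal matrix whose `t`-th diagonal entry is `r (l t)`. -/
def patDiag {m p : ℕ} (l : Fin m → Fin p) (r : Fin p → ℂ) :
    Matrix (Fin m) (Fin m) ℂ :=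
  Matrix.diagonal (r ∘ l)

theorem stmt9 (m n₁ n₂ p : ℕ) (hm : 0 < m) (hn₁ : 0 < n₁) (hn₂ : 0 < n₂) (hp : 0 < p)
    (l : Fin m → Fin p)
    (V₁ : Matrix (Fin m) (Fin n₁) ℂ) (V₂ : Matrix (Fin m) (Fin n₂) ℂ) :
    ∀ᵐ rs : (Fin p → ℂ) × (Fin p → ℂ),
      (Matrix.fromCols (patDiag l rs.1 * V₁) (patDiag l rs.2 * V₂)).rank ≥
        (Matrix.fromCols V₁ V₂).rank := by
  classical
  set M := Matrix.fromCols V₁ V₂ with hM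
  obtain ⟨α, β, hdet⟩ := exists_minor M
  let var : Fin m → (Fin n₁ ⊕ Fin n₂) → (Fin p ⊕ Fin p) := fun i j =>
    Sum.elim (fun _ => Sum.inl (l i)) (fun _ => Sum.inr (l i)) j
  let N : Matrix (Fin M.rank) (Fin M.rank) (MvPolynomial (Fin p ⊕ Fin p) ℂ) :=
    Matrix.of fun i j => MvPolynomial.X (var (α i) (β j)) * MvPolynomial.C (M (α i) (β j))
  have heval : ∀ x : (Fin p ⊕ Fin p) → ℂ,
      eval x N.det = ((Matrix.fromCols (patDiag l (fun i => x (Sum.inl i)) * V₁)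
        (patDiag l (fun i => x (Sum.inr i)) * V₂)).submatrix α β).det := by
    intro x
    rw [RingHom.map_det]
    congr 1
    ext i j
    rcases hbj : β j with j' | j' <;>
      simp [N, var, hbj, patDiag, hM, Matrix.fromCols, Matrix.diagonal_mul, mul_comm]
  have h1 : patDiag l (fun _ : Fin p => (1 : ℂ)) = 1 := by
    ext i j
    simp [patDiag, Matrix.diagonal, Matrix.one_apply]
  have hone : eval (fun _ => (1 : ℂ)) N.det = (M.submatrix α β).det := by
    rw [heval, h1, Matrix.one_mul, Matrix.one_mul]
  have hq : N.det ≠ 0 := fun h => hdet (by rw [← hone, h, map_zero])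
  have hae := ae_eval_ne_zero N.det hq
  have key : ∀ᵐ x : (Fin p ⊕ Fin p) → ℂ,
      (Matrix.fromCols (patDiag l (fun i => x (Sum.inl i)) * V₁)
        (patDiag l (fun i => x (Sum.inr i)) * V₂)).rank ≥ M.rank := by
    filter_upwards [hae] with x hx
    rw [heval] at hx
    exact le_rank_of_det_submatrix _ α β hx
  have hmp := volume_measurePreserving_sumPiEquivProdPi_symm (fun _ : Fin p ⊕ Fin p => ℂ)
  have := hmp.quasiMeasurePreserving.ae key
  filter_upwards [this] with rs h
  exact h
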